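/- arXiv:0901.0356 — 4 statements merged into one kernel-verified Lean document; each statement's English description precedes it below -/
import Mathlib

section
/- Let w : [0,1] → ℝ≥0 be continuous, W(t) = ∫_0^t w(x) dx, and W̄(t) = ∫_0^t W(x) dx. Then for all η, η̂ ∈ [0,1], ∫_{min(η,η̂)}^{max(η,η̂)} |η - c|·w(c) dc = W̄(η) - W̄(η̂) - (η - η̂)·W(η̂). -/
/-- The `w`-weighted regret has the Bregman form with generator `W̄`:
`∫_{η∧ηh}^{η∨ηh} |η - c| w(c) dc = W̄(η) - W̄(ηh) - (η-ηh)·W(ηh)`. -/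
theorem weighted_regret_bregman_form (w : ℝ → ℝ) (hw : Continuous w)
    (hw0 : ∀ t ∈ Set.Icc (0:ℝ) 1, 0 ≤ w t) (W Wb : ℝ → ℝ)
    (hW : ∀ t, W t = ∫ x in (0:ℝ)..t, w x)
    (hWb : ∀ t, Wb t = ∫ x in (0:ℝ)..t, W x) :
    ∀ η ∈ Set.Icc (0:ℝ) 1, ∀ ηh ∈ Set.Icc (0:ℝ) 1,
      (∫ c in (min η ηh)..(max η ηh), |η - c| * w c)
        = Wb η - Wb ηh - (η - ηh) * W ηh := by
  have hWfun : W = fun u => ∫ x in (0:ℝ)..u, w x := funext hW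
  have hWd : ∀ t, HasDerivAt W (w t) t := by
    intro t
    rw [hWfun]
    exact intervalIntegral.integral_hasDerivAt_right (hw.intervalIntegrable 0 t)
      (hw.stronglyMeasurableAtFilter _ _) hw.continuousAt
  have hWcont : Continuous W := by
    rw [continuous_iff_continuousAt]; exact fun t => (hWd t).continuousAt
  intro η hη ηh hηh
  have hF : ∀ c : ℝ, HasDerivAt (fun c => (η - c) * W c) ((η - c) * w c - W c) c := by
    intro c
    have h1 : HasDerivAt (fun c : ℝ => η - c) (0 - 1) c :=
      (hasDerivAt_const c η).sub (hasDerivAt_id c)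
    have := h1.mul (hWd c)
    exact this.congr_deriv (by ring)
  have hcont : Continuous (fun c => (η - c) * w c - W c) :=
    ((continuous_const.sub continuous_id).mul hw).sub hWcont
  have key : (∫ c in ηh..η, ((η - c) * w c - W c))
      = (η - η) * W η - (η - ηh) * W ηh :=
    intervalIntegral.integral_eq_sub_of_hasDerivAt (fun c _ => hF c)
      (hcont.intervalIntegrable _ _)
  have hWint : (∫ c in ηh..η, W c) = Wb η - Wb ηh := by
    rw [hWb, hWb]
    exact (intervalIntegral.integral_interval_sub_left
      (hWcont.intervalIntegrable 0 η) (hWcont.intervalIntegrable 0 ηh)).symm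
  have hsplit : (∫ c in ηh..η, ((η - c) * w c - W c))
      = (∫ c in ηh..η, (η - c) * w c) - ∫ c in ηh..η, W c :=
    intervalIntegral.integral_sub
      (((continuous_const.sub continuous_id).mul hw).intervalIntegrable _ _)
      (hWcont.intervalIntegrable _ _)
  have main : (∫ c in ηh..η, (η - c) * w c) = Wb η - Wb ηh - (η - ηh) * W ηh := by
    have := key
    rw [hsplit, hWint] at this
    linarith
  rcases le_total ηh η with h | h
  · rw [min_eq_right h, max_eq_left h, ← main]
    apply intervalIntegral.integral_congr
    intro c hc
    rw [Set.uIcc_of_le h] at hc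
    show |η - c| * w c = (η - c) * w c
    rw [abs_of_nonneg (sub_nonneg.2 hc.2)]
  · rw [min_eq_left h, max_eq_right h, ← main, intervalIntegral.integral_symm,
      ← intervalIntegral.integral_neg]
    apply intervalIntegral.integral_congr
    intro c hc
    rw [Set.uIcc_of_ge h] at hc
    show -(|η - c| * w c) = (η - c) * w c
    rw [abs_of_nonpos (sub_nonpos.2 hc.1)]
    ring
end

section
/- Let w, W, W̄ be as above with w ≥ 0 continuous. Suppose c₀ ∈ (0,1) and η, η̂ ∈ [0,1] satisfy B_{c₀}(η, η̂) = α ∈ (0, c₀), where B_{c₀}(η,η̂) = |η - c₀|·𝟙[min(η,η̂) < c₀ ≤ max(η,η̂)]. Then the w-weighted regret satisfies B_w(η, η̂) ≥ min( W̄(c₀ - α) + α·W(c₀), W̄(c₀ + α) - α·W(c₀) ) - W̄(c₀), where B_w(η,η̂) = W̄(η) - W̄(η̂) - (η - η̂)·W(η̂). -/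
/-- Surrogate regret bound: if the cost-weighted regret at cost `c₀` equals
`α ∈ (0, c₀)`, then the `w`-weighted regret is at least
`min(W̄(c₀-α) + α·W(c₀), W̄(c₀+α) - α·W(c₀)) - W̄(c₀)`. -/
theorem surrogate_regret_bound (w : ℝ → ℝ) (hw : Continuous w)
    (hw0 : ∀ t ∈ Set.Icc (0:ℝ) 1, 0 ≤ w t) (W Wb : ℝ → ℝ)
    (hW : ∀ t, W t = ∫ x in (0:ℝ)..t, w x)
    (hWb : ∀ t, Wb t = ∫ x in (0:ℝ)..t, W x)
    (c₀ α η ηh : ℝ) (hc₀ : c₀ ∈ Set.Ioo (0:ℝ) 1) (hα : α ∈ Set.Ioo (0:ℝ) c₀)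
    (hη : η ∈ Set.Icc (0:ℝ) 1) (hηh : ηh ∈ Set.Icc (0:ℝ) 1)
    (hB : |η - c₀| * (if min η ηh < c₀ ∧ c₀ ≤ max η ηh then 1 else 0) = α) :
    min (Wb (c₀ - α) + α * W c₀) (Wb (c₀ + α) - α * W c₀) - Wb c₀
      ≤ Wb η - Wb ηh - (η - ηh) * W ηh := by
  have hWeq : W = fun t => ∫ x in (0:ℝ)..t, w x := funext hW
  have hWbeq : Wb = fun t => ∫ x in (0:ℝ)..t, W x := funext hWb
  have hW' : ∀ v, HasDerivAt W (w v) v := by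
    intro v; rw [hWeq]; exact (hw.integral_hasStrictDerivAt 0 v).hasDerivAt
  have hWcont : Continuous W := by
    have : Differentiable ℝ W := fun v => (hW' v).differentiableAt
    exact this.continuous
  have hWb' : ∀ v, HasDerivAt Wb (W v) v := by
    intro v; rw [hWbeq]; exact (hWcont.integral_hasStrictDerivAt 0 v).hasDerivAt
  set f : ℝ → ℝ := fun v => -Wb v - (η - v) * W v with hf_def
  have hf' : ∀ v, HasDerivAt f ((v - η) * w v) v := by
    intro v
    have h2 : HasDerivAt (fun v => (η - v) * W v) ((0 - 1) * W v + (η - v) * w v) v :=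
      ((hasDerivAt_const v η).sub (hasDerivAt_id v)).mul (hW' v)
    have : HasDerivAt (fun v => -Wb v - (η - v) * W v) (-W v - ((0 - 1) * W v + (η - v) * w v)) v := (hWb' v).neg.sub h2
    convert this using 1
    ring
  have hfc : Continuous f := by
    have : Differentiable ℝ f := fun v => (hf' v).differentiableAt
    exact this.continuous
  -- extract the indicator information
  have hind : min η ηh < c₀ ∧ c₀ ≤ max η ηh := by
    by_contra h
    rw [if_neg h, mul_zero] at hB
    exact absurd hB.symm (ne_of_gt hα.1)
  rw [if_pos hind, mul_one] at hB
  rcases (abs_eq (le_of_lt hα.1)).mp hB with hcase | hcase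
  · -- η = c₀ + α, so ηh < c₀ ≤ η ; use antitone branch
    have hηc : η = c₀ + α := by linarith
    have hηhc : ηh ≤ c₀ := by
      rcases le_or_gt ηh c₀ with h | h
      · exact h
      · exfalso
        have : c₀ < min η ηh := lt_min (by linarith [hα.1]) h
        linarith [hind.1]
    have hanti : AntitoneOn f (Set.Icc (0:ℝ) η) := by
      apply antitoneOn_of_deriv_nonpos (convex_Icc _ _) hfc.continuousOn
        (fun v _ => (hf' v).differentiableAt.differentiableWithinAt)
      intro v hv
      rw [interior_Icc] at hv
      rw [(hf' v).deriv]
      have hwv : 0 ≤ w v := hw0 v ⟨le_of_lt hv.1, le_trans (le_of_lt hv.2) hη.2⟩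
      nlinarith [hv.2]
    have hmem1 : ηh ∈ Set.Icc (0:ℝ) η := ⟨hηh.1, by linarith [hα.1]⟩
    have hmem2 : c₀ ∈ Set.Icc (0:ℝ) η := ⟨le_of_lt hc₀.1, by linarith [hα.1]⟩
    have hle : f c₀ ≤ f ηh := hanti hmem1 hmem2 hηhc
    have hB2 : Wb (c₀ + α) - α * W c₀ - Wb c₀ = Wb η + f c₀ := by
      simp only [hf_def]
      rw [hηc]
      ring
    calc min (Wb (c₀ - α) + α * W c₀) (Wb (c₀ + α) - α * W c₀) - Wb c₀
        ≤ Wb (c₀ + α) - α * W c₀ - Wb c₀ := by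
          have := min_le_right (Wb (c₀ - α) + α * W c₀) (Wb (c₀ + α) - α * W c₀)
          linarith
      _ = Wb η + f c₀ := hB2
      _ ≤ Wb η + f ηh := by linarith
      _ = Wb η - Wb ηh - (η - ηh) * W ηh := by simp only [hf_def]; ring
  · -- η = c₀ - α, so η < c₀ ≤ ηh ; use monotone branch
    have hηc : η = c₀ - α := by linarith
    have hηhc : c₀ ≤ ηh := by
      rcases le_or_gt c₀ ηh with h | h
      · exact h
      · exfalso
        have : max η ηh < c₀ := max_lt (by linarith [hα.1]) h
        linarith [hind.2]
    have hmono : MonotoneOn f (Set.Icc η 1) := by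
      apply monotoneOn_of_deriv_nonneg (convex_Icc _ _) hfc.continuousOn
        (fun v _ => (hf' v).differentiableAt.differentiableWithinAt)
      intro v hv
      rw [interior_Icc] at hv
      rw [(hf' v).deriv]
      have hwv : 0 ≤ w v := hw0 v ⟨le_trans hη.1 (le_of_lt hv.1), le_of_lt hv.2⟩
      nlinarith [hv.1]
    have hmem1 : c₀ ∈ Set.Icc η 1 := ⟨by linarith [hα.1], le_of_lt hc₀.2⟩
    have hmem2 : ηh ∈ Set.Icc η 1 := ⟨by linarith [hα.1], hηh.2⟩
    have hle : f c₀ ≤ f ηh := hmono hmem1 hmem2 hηhc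
    have hB2 : Wb (c₀ - α) + α * W c₀ - Wb c₀ = Wb η + f c₀ := by
      simp only [hf_def]
      rw [hηc]
      ring
    calc min (Wb (c₀ - α) + α * W c₀) (Wb (c₀ + α) - α * W c₀) - Wb c₀
        ≤ Wb (c₀ - α) + α * W c₀ - Wb c₀ := by
          have := min_le_left (Wb (c₀ - α) + α * W c₀) (Wb (c₀ + α) - α * W c₀)
          linarith
      _ = Wb η + f c₀ := hB2
      _ ≤ Wb η + f ηh := by linarith
      _ = Wb η - Wb ηh - (η - ηh) * W ηh := by simp only [hf_def]; ring
end

section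
/- Let P, Q be probability measures on a measurable space X, both absolutely continuous with respect to a probability measure M with densities p, q. For the convex function f(t) = (√t − 1)², the f-divergence satisfies the tight lower bound h²(P,Q) := ∫ (√p − √q)² dM ≥ 2 − √(4 − V²), where V := ∫ |p − q| dM is the variational divergence. -/
open MeasureTheory

/-- Pinsker-type inequality for the Hellinger divergence:
`h²(P,Q) ≥ 2 - √(4 - V²)` where `V` is the variational divergence. -/
theorem hellinger_pinsker {X : Type*} [MeasurableSpace X]
    (M P Q : Measure X) [IsProbabilityMeasure M] [IsProbabilityMeasure P]
    [IsProbabilityMeasure Q] (p q : X → ℝ) (hpm : Measurable p) (hqm : Measurable q)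
    (hp0 : ∀ x, 0 ≤ p x) (hq0 : ∀ x, 0 ≤ q x)
    (hP : P = M.withDensity (fun x => ENNReal.ofReal (p x)))
    (hQ : Q = M.withDensity (fun x => ENNReal.ofReal (q x))) :
    2 - Real.sqrt (4 - (∫ x, |p x - q x| ∂M) ^ 2)
      ≤ ∫ x, (Real.sqrt (p x) - Real.sqrt (q x)) ^ 2 ∂M := by
  -- lintegrals of densities are 1
  have hPl : ∫⁻ x, ENNReal.ofReal (p x) ∂M = 1 := by
    have := measure_univ (μ := P)
    rw [hP, withDensity_apply _ MeasurableSet.univ] at this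
    simpa using this
  have hQl : ∫⁻ x, ENNReal.ofReal (q x) ∂M = 1 := by
    have := measure_univ (μ := Q)
    rw [hQ, withDensity_apply _ MeasurableSet.univ] at this
    simpa using this
  -- integrability of p and q
  have hp_int : Integrable p M := by
    refine ⟨hpm.aestronglyMeasurable, ?_⟩
    rw [hasFiniteIntegral_iff_ofReal (Filter.Eventually.of_forall hp0)]
    simp [hPl]
  have hq_int : Integrable q M := by
    refine ⟨hqm.aestronglyMeasurable, ?_⟩
    rw [hasFiniteIntegral_iff_ofReal (Filter.Eventually.of_forall hq0)]
    simp [hQl]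
  have hpI : ∫ x, p x ∂M = 1 := by
    rw [integral_eq_lintegral_of_nonneg_ae (Filter.Eventually.of_forall hp0)
      hpm.aestronglyMeasurable, hPl]
    simp
  have hqI : ∫ x, q x ∂M = 1 := by
    rw [integral_eq_lintegral_of_nonneg_ae (Filter.Eventually.of_forall hq0)
      hqm.aestronglyMeasurable, hQl]
    simp
  set s : X → ℝ := fun x => Real.sqrt (p x) with hs
  set t : X → ℝ := fun x => Real.sqrt (q x) with ht
  have hsm : Measurable s := hpm.sqrt
  have htm : Measurable t := hqm.sqrt
  have hs2 : ∀ x, s x ^ 2 = p x := fun x => Real.sq_sqrt (hp0 x)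
  have ht2 : ∀ x, t x ^ 2 = q x := fun x => Real.sq_sqrt (hq0 x)
  -- Memℒp 2 for s, t
  have hsL2 : MemLp s 2 M := by
    rw [memLp_two_iff_integrable_sq hsm.aestronglyMeasurable]
    exact hp_int.congr (Filter.Eventually.of_forall fun x => (hs2 x).symm)
  have htL2 : MemLp t 2 M := by
    rw [memLp_two_iff_integrable_sq htm.aestronglyMeasurable]
    exact hq_int.congr (Filter.Eventually.of_forall fun x => (ht2 x).symm)
  have haL2 : MemLp (fun x => |s x - t x|) 2 M := (hsL2.sub htL2).abs
  have hbL2 : MemLp (fun x => s x + t x) 2 M := hsL2.add htL2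
  have ha2_int : Integrable (fun x => (s x - t x) ^ 2) M := (hsL2.sub htL2).integrable_sq
  have hb2_int : Integrable (fun x => (s x + t x) ^ 2) M := hbL2.integrable_sq
  set H : ℝ := ∫ x, (s x - t x) ^ 2 ∂M with hH
  have hHnn : 0 ≤ H := integral_nonneg fun x => sq_nonneg _
  -- ∫ b² = 4 - H
  have hb2 : ∫ x, (s x + t x) ^ 2 ∂M = 4 - H := by
    have hsum : ∫ x, ((s x - t x) ^ 2 + (s x + t x) ^ 2) ∂M = H + ∫ x, (s x + t x) ^ 2 ∂M :=
      integral_add ha2_int hb2_int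
    have hcongr : ∫ x, ((s x - t x) ^ 2 + (s x + t x) ^ 2) ∂M
        = ∫ x, (2 * (p x + q x)) ∂M := by
      refine integral_congr_ae (Filter.Eventually.of_forall fun x => ?_)
      show (s x - t x) ^ 2 + (s x + t x) ^ 2 = 2 * (p x + q x)
      rw [← hs2 x, ← ht2 x]; ring
    rw [hcongr, integral_const_mul, integral_add hp_int hq_int, hpI, hqI] at hsum
    linarith
  have hb2nn : (0:ℝ) ≤ ∫ x, (s x + t x) ^ 2 ∂M := integral_nonneg fun x => sq_nonneg _
  have hHle4 : H ≤ 4 := by rw [hb2] at hb2nn; linarith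
  set V : ℝ := ∫ x, |p x - q x| ∂M with hV
  have hVnn : 0 ≤ V := integral_nonneg fun x => abs_nonneg _
  -- Cauchy-Schwarz: V ≤ √H * √(4-H)
  have hCS : V ≤ Real.sqrt H * Real.sqrt (4 - H) := by
    have h22 : (2:ℝ).HolderConjugate 2 := Real.holderConjugate_iff.mpr ⟨one_lt_two, by norm_num⟩
    have key := integral_mul_le_Lp_mul_Lq_of_nonneg (μ := M) h22
      (Filter.Eventually.of_forall fun x => abs_nonneg (s x - t x))
      (Filter.Eventually.of_forall fun x => add_nonneg (Real.sqrt_nonneg _) (Real.sqrt_nonneg _))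
      (by simpa using haL2) (by simpa using hbL2)
    have heq : ∫ x, |s x - t x| * (s x + t x) ∂M = V := by
      refine integral_congr_ae (Filter.Eventually.of_forall fun x => ?_)
      have hb0 : 0 ≤ s x + t x := add_nonneg (Real.sqrt_nonneg _) (Real.sqrt_nonneg _)
      show |s x - t x| * (s x + t x) = |p x - q x|
      rw [← abs_of_nonneg hb0, ← abs_mul]
      congr 1
      rw [← hs2 x, ← ht2 x]; ring
    have h1 : ∫ x, |s x - t x| ^ (2:ℝ) ∂M = H := by
      refine integral_congr_ae (Filter.Eventually.of_forall fun x => ?_)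
      show |s x - t x| ^ (2:ℝ) = (s x - t x) ^ 2
      rw [show ((2:ℝ) = ((2:ℕ):ℝ)) by norm_num, Real.rpow_natCast, sq_abs]
    have h2 : ∫ x, (s x + t x) ^ (2:ℝ) ∂M = 4 - H := by
      rw [← hb2]
      refine integral_congr_ae (Filter.Eventually.of_forall fun x => ?_)
      show (s x + t x) ^ (2:ℝ) = (s x + t x) ^ 2
      rw [show ((2:ℝ) = ((2:ℕ):ℝ)) by norm_num, Real.rpow_natCast]
    rw [heq, h1, h2] at key
    calc V ≤ H ^ (1/2 : ℝ) * (4 - H) ^ (1/2 : ℝ) := key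
      _ = Real.sqrt H * Real.sqrt (4 - H) := by
          rw [Real.sqrt_eq_rpow, Real.sqrt_eq_rpow]
  have hVsq : V ^ 2 ≤ H * (4 - H) := by
    have := mul_le_mul hCS hCS hVnn (mul_nonneg (Real.sqrt_nonneg _) (Real.sqrt_nonneg _))
    calc V ^ 2 = V * V := sq V
      _ ≤ (Real.sqrt H * Real.sqrt (4 - H)) * (Real.sqrt H * Real.sqrt (4 - H)) := this
      _ = (Real.sqrt H * Real.sqrt H) * (Real.sqrt (4 - H) * Real.sqrt (4 - H)) := by ring
      _ = H * (4 - H) := by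
          rw [Real.mul_self_sqrt hHnn, Real.mul_self_sqrt (by linarith)]
  -- conclude
  have hsq : (2 - H) ^ 2 ≤ 4 - V ^ 2 := by nlinarith
  have : Real.sqrt ((2 - H) ^ 2) ≤ Real.sqrt (4 - V ^ 2) := Real.sqrt_le_sqrt hsq
  rw [Real.sqrt_sq_eq_abs] at this
  have habs : 2 - H ≤ |2 - H| := le_abs_self _
  linarith
end

section
/- Let P, Q be probability measures on X with densities p, q with respect to M, and V := ∫|p−q| dM. Then the Pearson chi-squared divergence χ²(P,Q) := ∫ (p−q)²/q dM (with the convention that the integrand is ∞·𝟙[p>0] when q = 0) satisfies χ²(P,Q) ≥ V² when V < 1 and χ²(P,Q) ≥ V/(2−V) when 1 ≤ V < 2. -/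
open MeasureTheory

/-- Tight Pinsker-type inequality for the Pearson chi-squared divergence:
`χ²(P,Q) ≥ V²` when `V < 1`, and `χ²(P,Q) ≥ V/(2-V)` when `1 ≤ V < 2`. -/
theorem chi_squared_pinsker {X : Type*} [MeasurableSpace X]
    (M P Q : Measure X) [IsProbabilityMeasure M] [IsProbabilityMeasure P]
    [IsProbabilityMeasure Q] (p q : X → ℝ) (hpm : Measurable p) (hqm : Measurable q)
    (hp0 : ∀ x, 0 ≤ p x) (hq0 : ∀ x, 0 ≤ q x)
    (hP : P = M.withDensity (fun x => ENNReal.ofReal (p x)))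
    (hQ : Q = M.withDensity (fun x => ENNReal.ofReal (q x))) :
    ((∫ x, |p x - q x| ∂M) < 1 →
      ENNReal.ofReal ((∫ x, |p x - q x| ∂M) ^ 2)
        ≤ ∫⁻ x, (if q x = 0 then (if 0 < p x then ⊤ else 0)
            else ENNReal.ofReal ((p x - q x) ^ 2 / q x)) ∂M) ∧
    (1 ≤ (∫ x, |p x - q x| ∂M) → (∫ x, |p x - q x| ∂M) < 2 →
      ENNReal.ofReal ((∫ x, |p x - q x| ∂M) / (2 - ∫ x, |p x - q x| ∂M))
        ≤ ∫⁻ x, (if q x = 0 then (if 0 < p x then ⊤ else 0)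
            else ENNReal.ofReal ((p x - q x) ^ 2 / q x)) ∂M) := by
  set V : ℝ := ∫ x, |p x - q x| ∂M with hVdef
  set F : X → ENNReal := fun x => (if q x = 0 then (if 0 < p x then ⊤ else 0)
      else ENNReal.ofReal ((p x - q x) ^ 2 / q x)) with hFdef
  -- basic facts
  have hp1 : ∫⁻ x, ENNReal.ofReal (p x) ∂M = 1 := by
    have h := measure_univ (μ := P)
    rw [hP, withDensity_apply _ MeasurableSet.univ, setLIntegral_univ] at h
    exact h
  have hq1 : ∫⁻ x, ENNReal.ofReal (q x) ∂M = 1 := by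
    have h := measure_univ (μ := Q)
    rw [hQ, withDensity_apply _ MeasurableSet.univ, setLIntegral_univ] at h
    exact h
  have hip : Integrable p M := by
    refine ⟨hpm.aestronglyMeasurable, ?_⟩
    rw [hasFiniteIntegral_iff_ofReal (ae_of_all _ hp0), hp1]
    exact ENNReal.one_lt_top
  have hiq : Integrable q M := by
    refine ⟨hqm.aestronglyMeasurable, ?_⟩
    rw [hasFiniteIntegral_iff_ofReal (ae_of_all _ hq0), hq1]
    exact ENNReal.one_lt_top
  have hpint : ∫ x, p x ∂M = 1 := by
    rw [integral_eq_lintegral_of_nonneg_ae (ae_of_all _ hp0) hpm.aestronglyMeasurable, hp1]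
    simp
  have hqint : ∫ x, q x ∂M = 1 := by
    rw [integral_eq_lintegral_of_nonneg_ae (ae_of_all _ hq0) hqm.aestronglyMeasurable, hq1]
    simp
  have hsub : ∫ x, (p x - q x) ∂M = 0 := by
    rw [integral_sub hip hiq, hpint, hqint]; ring
  have hipq : Integrable (fun x => p x - q x) M := hip.sub hiq
  have hiabs : Integrable (fun x => |p x - q x|) M := hipq.abs
  have hFm : Measurable F := by
    refine Measurable.ite (hqm (measurableSet_singleton 0)) ?_ ?_
    · exact Measurable.ite (measurableSet_lt measurable_const hpm) measurable_const
        measurable_const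
    · exact ENNReal.measurable_ofReal.comp (((hpm.sub hqm).pow_const 2).div hqm)
  by_cases htop : ∫⁻ x, F x ∂M = ⊤
  · exact ⟨fun _ => htop ▸ le_top, fun _ _ => htop ▸ le_top⟩
  -- finite case
  set g : X → ℝ := fun x => (p x - q x) ^ 2 / q x with hgdef
  have hgm : Measurable g := ((hpm.sub hqm).pow_const 2).div hqm
  have hg0 : ∀ x, 0 ≤ g x := fun x => div_nonneg (sq_nonneg _) (hq0 x)
  have haep : ∀ᵐ x ∂M, q x = 0 → p x = 0 := by
    have h := ae_lt_top hFm htop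
    filter_upwards [h] with x hx hq
    by_contra hp
    have hp' : 0 < p x := lt_of_le_of_ne (hp0 x) (Ne.symm hp)
    rw [hFdef] at hx
    simp only [hq, if_pos, hp', if_true] at hx
    exact (lt_irrefl _ hx).elim
  have hFg : ∀ᵐ x ∂M, F x = ENNReal.ofReal (g x) := by
    filter_upwards [haep] with x hx
    rw [hFdef, hgdef]
    by_cases hq : q x = 0
    · have hp := hx hq
      simp [hq, hp]
    · simp [hq]
  have hlF : ∫⁻ x, F x ∂M = ENNReal.ofReal (∫ x, g x ∂M) := by
    rw [lintegral_congr_ae hFg,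
      ← ofReal_integral_eq_lintegral_ofReal ?_ (ae_of_all _ hg0)]
    refine ⟨hgm.aestronglyMeasurable, ?_⟩
    rw [hasFiniteIntegral_iff_ofReal (ae_of_all _ hg0)]
    rw [← lintegral_congr_ae hFg]
    exact lt_top_iff_ne_top.2 htop
  have hig : Integrable g M := by
    refine ⟨hgm.aestronglyMeasurable, ?_⟩
    rw [hasFiniteIntegral_iff_ofReal (ae_of_all _ hg0), ← lintegral_congr_ae hFg]
    exact lt_top_iff_ne_top.2 htop
  -- key lemma
  have key : ∀ a b c k : ℝ, 0 ≤ k →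
      (∀ x, (a * |p x - q x| + b * (p x - q x) + c * q x) * q x ≤ k * (p x - q x) ^ 2) →
      a * V + c ≤ k * ∫ x, g x ∂M := by
    intro a b c k hk hpt
    have hle : ∀ᵐ x ∂M, a * |p x - q x| + b * (p x - q x) + c * q x ≤ k * g x := by
      filter_upwards [haep] with x hx
      by_cases hq : q x = 0
      · have hp := hx hq
        rw [hgdef]
        simp [hq, hp]
      · have hqpos : 0 < q x := lt_of_le_of_ne (hq0 x) (Ne.symm hq)
        rw [hgdef]
        rw [show k * ((p x - q x) ^ 2 / q x) = k * (p x - q x) ^ 2 / q x by ring,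
          le_div_iff₀ hqpos]
        exact hpt x
    have hLint : Integrable (fun x => a * |p x - q x| + b * (p x - q x) + c * q x) M :=
      ((hiabs.const_mul a).add (hipq.const_mul b)).add (hiq.const_mul c)
    have hI1 : Integrable (fun x => a * |p x - q x|) M := hiabs.const_mul a
    have hI2 : Integrable (fun x => b * (p x - q x)) M := hipq.const_mul b
    have hI3 : Integrable (fun x => c * q x) M := hiq.const_mul c
    have hI12 : Integrable (fun x => a * |p x - q x| + b * (p x - q x)) M := hI1.add hI2
    have h1 : ∫ x, (a * |p x - q x| + b * (p x - q x) + c * q x) ∂M = a * V + c := by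
      rw [integral_add hI12 hI3, integral_add hI1 hI2,
        integral_const_mul, integral_const_mul, integral_const_mul, hsub, hqint, ← hVdef]
      ring
    calc a * V + c = ∫ x, (a * |p x - q x| + b * (p x - q x) + c * q x) ∂M := h1.symm
      _ ≤ ∫ x, k * g x ∂M := integral_mono_ae hLint (hig.const_mul k) hle
      _ = k * ∫ x, g x ∂M := integral_const_mul k g
  constructor
  · intro hV1
    rw [hlF]
    apply ENNReal.ofReal_le_ofReal
    have h := key (2 * V) 0 (-(V ^ 2)) 1 zero_le_one ?_
    · linarith
    · intro x
      nlinarith [sq_nonneg (|p x - q x| - V * q x), sq_abs (p x - q x),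
        abs_nonneg (p x - q x), hq0 x]
  · intro hV1 hV2
    rw [hlF]
    apply ENNReal.ofReal_le_ofReal
    have hw : (0:ℝ) < 2 - V := by linarith
    have h := key 2 (-(2 * (V - 1) ^ 2)) (-(V ^ 2)) ((2 - V) ^ 2)
      (sq_nonneg _) ?_
    · rw [div_le_iff₀ hw]
      nlinarith [h]
    · intro x
      rcases abs_cases (p x - q x) with ⟨ha, hu⟩ | ⟨ha, hu⟩
      · rw [ha]
        nlinarith [sq_nonneg ((2 - V) * (p x - q x) - V * q x)]
      · rw [ha]
        have h4 : 0 ≤ (V - 1) * (p x * q x) :=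
          mul_nonneg (by linarith) (mul_nonneg (hp0 x) (hq0 x))
        nlinarith [sq_nonneg ((2 - V) * p x), h4, hp0 x, hq0 x]
end
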